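/- Let U be a finite universe and 𝓕 ⊆ 2^U a finite family of subsets of U with U = ⋃𝓕. Construct the simple graph G with vertex set U ∪ {v_F : F ∈ 𝓕} ∪ {x, y} (all new vertices distinct from U), and edge set {{u, v_F} : F ∈ 𝓕, u ∈ F} ∪ {{x, v_F} : F ∈ 𝓕} ∪ {{x, y}}. Then the minimum size of a set cover of (U, 𝓕) equals the minimum size of a dominating set of G minus 1. Moreover, U ∪ {x} is a vertex cover of G. -/

import Mathlib

open SimpleGraph

/-- Vertices of the reduction graph: the universe `U`, a vertex `v_F` for each
    `F ∈ 𝓕`, and two extra vertices `x = inr (inr 0)` and `y = inr (inr 1)`. -/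
abbrev SCVertex {α : Type*} (𝓕 : Finset (Finset α)) : Type _ :=
  α ⊕ ({F : Finset α // F ∈ 𝓕} ⊕ Fin 2)

/-- Adjacency generator for the set-cover reduction: edges `{u, v_F}` for `u ∈ F`,
    edges `{x, v_F}` for all `F ∈ 𝓕`, and the edge `{x, y}`. -/
def scRel {α : Type*} (𝓕 : Finset (Finset α)) : SCVertex 𝓕 → SCVertex 𝓕 → Prop
  | Sum.inl u, Sum.inr (Sum.inl F) => u ∈ F.val
  | Sum.inr (Sum.inl _), Sum.inr (Sum.inr j) => j = 0
  | Sum.inr (Sum.inr i), Sum.inr (Sum.inr j) => i = 0 ∧ j = 1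
  | _, _ => False

/-- The reduction graph from `Set Cover` to `Dominating Set`. -/
def scGraph {α : Type*} (𝓕 : Finset (Finset α)) : SimpleGraph (SCVertex 𝓕) :=
  fromRel (scRel 𝓕)

/-- Minimum size of a dominating set of `G`. -/
noncomputable def minDomSize {V : Type*} (G : SimpleGraph V) : ℕ :=
  sInf {n | ∃ S : Set V, (∀ v : V, v ∈ S ∨ ∃ u ∈ S, G.Adj u v) ∧ S.ncard = n}

/-- Minimum size of a set cover of `(U, 𝓕)`. -/
noncomputable def minSetCoverSize {α : Type*} (𝓕 : Finset (Finset α)) : ℕ :=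
  sInf {n | ∃ 𝓢 : Finset (Finset α), 𝓢 ⊆ 𝓕 ∧ (∀ u : α, ∃ F ∈ 𝓢, u ∈ F) ∧ 𝓢.card = n}

/-- If `U = ⋃𝓕`, the minimum size of a set cover of `(U, 𝓕)` equals the minimum size
    of a dominating set of the reduction graph minus 1; moreover `U ∪ {x}` is a vertex
    cover of the reduction graph. -/
theorem stmt7 {α : Type*} [Fintype α] (𝓕 : Finset (Finset α))
    (hcover : ∀ u : α, ∃ F ∈ 𝓕, u ∈ F) :
    minDomSize (scGraph 𝓕) = minSetCoverSize 𝓕 + 1 ∧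
    (∀ a b : SCVertex 𝓕, (scGraph 𝓕).Adj a b →
      a ∈ Set.range Sum.inl ∪ {Sum.inr (Sum.inr 0)} ∨
      b ∈ Set.range Sum.inl ∪ {Sum.inr (Sum.inr 0)}) := by
  classical
  -- the vertex cover part, as a helper for scRel
  have key : ∀ a b : SCVertex 𝓕, scRel 𝓕 a b →
      a ∈ Set.range Sum.inl ∪ {Sum.inr (Sum.inr 0)} ∨
      b ∈ Set.range Sum.inl ∪ {Sum.inr (Sum.inr 0)} := by
    intro a b h
    match a, b with
    | Sum.inl u, Sum.inr (Sum.inl F) => exact Or.inl (Or.inl ⟨u, rfl⟩)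
    | Sum.inr (Sum.inl _), Sum.inr (Sum.inr j) =>
      right; right
      have hj : j = 0 := h
      simp [hj]
    | Sum.inr (Sum.inr i), Sum.inr (Sum.inr j) =>
      left; right
      have hi : i = 0 := h.1
      simp [hi]
    | Sum.inl _, Sum.inl _ => exact h.elim
    | Sum.inl _, Sum.inr (Sum.inr _) => exact h.elim
    | Sum.inr (Sum.inl _), Sum.inl _ => exact h.elim
    | Sum.inr (Sum.inl _), Sum.inr (Sum.inl _) => exact h.elim
    | Sum.inr (Sum.inr _), Sum.inl _ => exact h.elim
    | Sum.inr (Sum.inr _), Sum.inr (Sum.inl _) => exact h.elim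
  constructor
  · -- Part A : from a set cover we get a dominating set of size card + 1
    have hA : ∀ 𝓢 : Finset (Finset α), 𝓢 ⊆ 𝓕 → (∀ u : α, ∃ F ∈ 𝓢, u ∈ F) →
        minDomSize (scGraph 𝓕) ≤ 𝓢.card + 1 := by
      intro 𝓢 hsub hcov
      set D : Finset (SCVertex 𝓕) :=
        (𝓢.attach.image (fun F => (Sum.inr (Sum.inl ⟨F.1, hsub F.2⟩) : SCVertex 𝓕)))
          ∪ {Sum.inr (Sum.inr 0)} with hD
      apply Nat.sInf_le
      refine ⟨(↑D : Set (SCVertex 𝓕)), ?_, ?_⟩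
      · intro v
        have hxD : (Sum.inr (Sum.inr 0) : SCVertex 𝓕) ∈ D := by simp [hD]
        match v with
        | Sum.inl u =>
          obtain ⟨F, hF𝓢, huF⟩ := hcov u
          right
          refine ⟨Sum.inr (Sum.inl ⟨F, hsub hF𝓢⟩), ?_, ?_⟩
          · simp only [hD, Finset.coe_union, Set.mem_union, Finset.coe_image,
              Set.mem_image]
            left
            exact ⟨⟨F, hF𝓢⟩, by simp, rfl⟩
          · rw [scGraph, SimpleGraph.fromRel_adj]
            exact ⟨by simp, Or.inr huF⟩
        | Sum.inr (Sum.inl F) =>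
          right
          refine ⟨Sum.inr (Sum.inr 0), by exact_mod_cast hxD, ?_⟩
          rw [scGraph, SimpleGraph.fromRel_adj]
          exact ⟨by simp, Or.inr (show (0 : Fin 2) = 0 from rfl)⟩
        | Sum.inr (Sum.inr i) =>
          by_cases hi : i = 0
          · left; subst hi; exact_mod_cast hxD
          · have hi1 : i = 1 := by omega
            subst hi1
            right
            refine ⟨Sum.inr (Sum.inr 0), by exact_mod_cast hxD, ?_⟩
            rw [scGraph, SimpleGraph.fromRel_adj]
            refine ⟨by simp, Or.inl ⟨rfl, rfl⟩⟩
      · rw [Set.ncard_coe_finset, hD]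
        rw [Finset.card_union_of_disjoint (by simp)]
        have hinj : Function.Injective
            (fun F : {x // x ∈ 𝓢} => (Sum.inr (Sum.inl ⟨F.1, hsub F.2⟩) : SCVertex 𝓕)) := by
          intro a b hab
          simp only [Sum.inr.injEq, Sum.inl.injEq, Subtype.mk.injEq] at hab
          exact Subtype.ext hab
        rw [Finset.card_image_of_injective _ hinj]
        simp
    -- Part B : from a dominating set we get a set cover of size ≤ card - 1
    have hB : ∀ S : Set (SCVertex 𝓕),
        (∀ v, v ∈ S ∨ ∃ u ∈ S, (scGraph 𝓕).Adj u v) →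
        minSetCoverSize 𝓕 + 1 ≤ S.ncard := by
      intro S hdom
      have hfin : S.Finite := Set.toFinite S
      set T := hfin.toFinset with hT
      choose Fc hFc1 hFc2 using hcover
      set g : SCVertex 𝓕 → Finset α := fun v =>
        match v with
        | Sum.inl u => Fc u
        | Sum.inr (Sum.inl F) => F.1
        | Sum.inr (Sum.inr _) => ∅ with hg
      set T' := T.filter (fun v => ∀ i : Fin 2, v ≠ Sum.inr (Sum.inr i)) with hT'
      set 𝓢 := T'.image g with h𝓢
      have hsub : 𝓢 ⊆ 𝓕 := by
        intro F hF
        simp only [h𝓢, Finset.mem_image] at hF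
        obtain ⟨v, hv, rfl⟩ := hF
        match v with
        | Sum.inl u => exact hFc1 u
        | Sum.inr (Sum.inl F) => exact F.2
        | Sum.inr (Sum.inr i) =>
          rw [hT', Finset.mem_filter] at hv
          exact absurd rfl (hv.2 i)
      have hcov : ∀ u : α, ∃ F ∈ 𝓢, u ∈ F := by
        intro u
        rcases hdom (Sum.inl u) with h | ⟨w, hw, hadj⟩
        · refine ⟨Fc u, ?_, hFc2 u⟩
          rw [h𝓢, Finset.mem_image]
          refine ⟨Sum.inl u, ?_, rfl⟩
          rw [hT', Finset.mem_filter]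
          exact ⟨by simpa [hT] using h, by intro i h; exact Sum.inl_ne_inr h⟩
        · rw [scGraph, SimpleGraph.fromRel_adj] at hadj
          obtain ⟨hne, hrel | hrel⟩ := hadj
          · exact absurd hrel (by cases w <;> simp [scRel])
          · match w, hrel with
            | Sum.inr (Sum.inl F), hrel =>
              refine ⟨F.1, ?_, hrel⟩
              rw [h𝓢, Finset.mem_image]
              refine ⟨Sum.inr (Sum.inl F), ?_, rfl⟩
              rw [hT', Finset.mem_filter]
              refine ⟨by simpa [hT] using hw, ?_⟩
              intro i h
              simp at h
      have hspecial : ∃ i : Fin 2, (Sum.inr (Sum.inr i) : SCVertex 𝓕) ∈ T := by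
        rcases hdom (Sum.inr (Sum.inr 1)) with h | ⟨w, hw, hadj⟩
        · exact ⟨1, by simpa [hT] using h⟩
        · rw [scGraph, SimpleGraph.fromRel_adj] at hadj
          obtain ⟨hne, hrel | hrel⟩ := hadj
          · match w, hrel with
            | Sum.inr (Sum.inr i), hrel =>
              exact ⟨i, by simpa [hT] using hw⟩
          · match w, hrel with
            | Sum.inr (Sum.inr i), hrel => exact ⟨i, by simpa [hT] using hw⟩
            | Sum.inr (Sum.inl F), hrel => exact absurd hrel (by simp [scRel])
            | Sum.inl u, hrel => exact hrel.elim
      have hcard : 𝓢.card + 1 ≤ T.card := by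
        have h1 : 𝓢.card ≤ T'.card := Finset.card_image_le
        obtain ⟨i, hi⟩ := hspecial
        have h2 : T'.card < T.card := by
          apply Finset.card_lt_card
          rw [Finset.ssubset_iff_of_subset (Finset.filter_subset _ _)]
          refine ⟨Sum.inr (Sum.inr i), hi, ?_⟩
          intro hmem
          exact (Finset.mem_filter.mp hmem).2 i rfl
        omega
      have hn : minSetCoverSize 𝓕 ≤ 𝓢.card := Nat.sInf_le ⟨𝓢, hsub, hcov, rfl⟩
      have hT2 : S.ncard = T.card := Set.ncard_eq_toFinset_card S hfin
      omega
    have hdomne : {n | ∃ S : Set (SCVertex 𝓕),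
        (∀ v, v ∈ S ∨ ∃ u ∈ S, (scGraph 𝓕).Adj u v) ∧ S.ncard = n}.Nonempty :=
      ⟨_, Set.univ, fun v => Or.inl trivial, rfl⟩
    have hcovne : {n | ∃ 𝓢 : Finset (Finset α), 𝓢 ⊆ 𝓕 ∧
        (∀ u : α, ∃ F ∈ 𝓢, u ∈ F) ∧ 𝓢.card = n}.Nonempty :=
      ⟨𝓕.card, 𝓕, Finset.Subset.refl _, hcover, rfl⟩
    obtain ⟨S, hSdom, hScard⟩ := Nat.sInf_mem hdomne
    obtain ⟨𝓢, h1, h2, h3⟩ := Nat.sInf_mem hcovne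
    have e1 := hA 𝓢 h1 h2
    have e2 := hB S hSdom
    rw [minDomSize, minSetCoverSize] at *
    omega
  · intro a b hadj
    rw [scGraph, SimpleGraph.fromRel_adj] at hadj
    rcases hadj.2 with h | h
    · exact key a b h
    · exact (key b a h).symm
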